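/- Let $T^{\circ}$ be a finite rooted tree with a distinguished node $\nu_\star$, and let $\mathcal{N}_\lambda(T^{\circ})$ denote the set of labelings $\ell : T^{\circ} \to \mathbb{N}$ which are monotone with respect to the tree partial order (i.e. $\ell_\nu \ge \ell_\varpi$ whenever $\nu \ge \varpi$, where $\nu \ge \varpi$ means $\varpi$ is an ancestor of $\nu$) and satisfy $2^{-\ell_{\nu_\star}} \le \lambda$. For $\eta : T^{\circ} \to \mathbb{R}$ set $\mathcal{I}_\lambda(\eta) = \sum_{\ell \in \mathcal{N}_\lambda(T^{\circ})} \prod_{\nu \in T^{\circ}} 2^{-\ell_\nu \eta_\nu}$ and $|\eta| = \sum_{\nu} \eta_\nu$. Assume: (1) for every $\nu \in T^{\circ}$, $\sum_{\upsilon \ge \nu} \eta_\upsilon > 0$; (2) for every $\nu \in T^{\circ}$ with $\nu \le \nu_\star$ such that the set $\{\upsilon : \upsilon \not\ge \nu\}$ is nonempty, one has $\sum_{\upsilon \not\ge \nu} \eta_\upsilon < 0$. Then there is a constant $C$ (depending on the tree and $\eta$ but not on $\lambda$) such that $\mathcal{I}_\lambda(\eta) \le C \lambda^{|\eta|}$ for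 all $\lambda \in (0,1]$. -/

import Mathlib

open scoped Classical
open ENNReal

section PiTsum

private lemma tsum_pi_fin' : ∀ (n : ℕ) (f : Fin n → ℕ → ℝ≥0∞),
    ∑' m : (Fin n → ℕ), ∏ i, f i (m i) = ∏ i, ∑' k, f i k := by
  intro n
  induction n with
  | zero =>
    intro f
    have h1 : ∀ m : Fin 0 → ℕ, (∏ i, f i (m i)) = 1 := fun m => Finset.prod_of_isEmpty _
    simp_rw [h1]
    rw [show (∑' (_ : Fin 0 → ℕ), (1:ℝ≥0∞)) = 1 from by
      rw [tsum_eq_single (default : Fin 0 → ℕ) (fun m hm => absurd (Subsingleton.elim m default) hm)]]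
    simp
  | succ n ih =>
    intro f
    rw [← (Fin.consEquiv (fun _ => ℕ)).tsum_eq]
    have h1 : ∀ p : ℕ × (Fin n → ℕ),
        (∏ i, f i ((Fin.consEquiv (fun _ => ℕ)) p i)) = f 0 p.1 * ∏ i : Fin n, f i.succ (p.2 i) := by
      intro p
      rw [Fin.prod_univ_succ]
      simp [Fin.consEquiv]
    simp_rw [h1]
    rw [ENNReal.tsum_prod']
    simp_rw [ENNReal.tsum_mul_left, ih (fun i => f i.succ), ENNReal.tsum_mul_right]
    rw [Fin.prod_univ_succ]

private lemma tsum_pi_prod' {ι : Type} [Fintype ι] (f : ι → ℕ → ℝ≥0∞) :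
    ∑' m : ι → ℕ, ∏ i, f i (m i) = ∏ i, ∑' k, f i k := by
  classical
  obtain ⟨n, ⟨e⟩⟩ : ∃ n, Nonempty (ι ≃ Fin n) := ⟨Fintype.card ι, ⟨Fintype.equivFin ι⟩⟩
  rw [← Equiv.tsum_eq (⟨fun g i => g (e i), fun m j => m (e.symm j),
     fun g => by funext j; simp, fun m => by funext i; simp⟩ : (Fin n → ℕ) ≃ (ι → ℕ))
     (fun m => ∏ i, f i (m i))]
  have h1 : ∀ g : Fin n → ℕ, (∏ i : ι, f i (g (e i))) = ∏ j : Fin n, f (e.symm j) (g j) := by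
    intro g
    rw [← e.symm.prod_comp (fun i => f i (g (e i)))]
    refine Finset.prod_congr rfl fun j _ => by simp
  show ∑' (g : Fin n → ℕ), (∏ i : ι, f i (g (e i))) = _
  simp_rw [h1, tsum_pi_fin' n (fun j => f (e.symm j))]
  rw [← e.symm.prod_comp]

end PiTsum

section Tree
variable {V : Type} [Fintype V] [PartialOrder V] [OrderBot V]

private lemma exists_pred' (htree : ∀ ν a b : V, a ≤ ν → b ≤ ν → a ≤ b ∨ b ≤ a)
    {ν : V} (h : ν ≠ ⊥) : ∃ p : V, p < ν ∧ ∀ ϖ : V, ϖ < ν → ϖ ≤ p := by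
  obtain ⟨p, hp, hmax⟩ : ∃ p ∈ Finset.univ.filter (· < ν),
      ∀ x ∈ Finset.univ.filter (· < ν), ¬ p < x := by
    obtain ⟨i, hi⟩ := Finset.exists_maximal (s := Finset.univ.filter (· < ν))
      ⟨⊥, by simp [bot_lt_iff_ne_bot, h]⟩
    exact ⟨i, hi.1, fun x hx hlt => hlt.not_ge (hi.2 hx hlt.le)⟩
  simp only [Finset.mem_filter, Finset.mem_univ, true_and] at hp hmax
  refine ⟨p, hp, fun ϖ hϖ => ?_⟩
  rcases htree ν ϖ p hϖ.le hp.le with h' | h'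
  · exact h'
  · rcases eq_or_lt_of_le h' with h'' | h''
    · exact h''.ge
    · exact absurd h'' (hmax ϖ hϖ)

private noncomputable def pred' (htree : ∀ ν a b : V, a ≤ ν → b ≤ ν → a ≤ b ∨ b ≤ a) (ν : V) : V :=
  if h : ν = ⊥ then ⊥ else (exists_pred' htree h).choose

private lemma pred'_lt (htree : ∀ ν a b : V, a ≤ ν → b ≤ ν → a ≤ b ∨ b ≤ a)
    {ν : V} (h : ν ≠ ⊥) : pred' htree ν < ν := by
  rw [pred', dif_neg h]; exact (exists_pred' htree h).choose_spec.1

private lemma le_pred' (htree : ∀ ν a b : V, a ≤ ν → b ≤ ν → a ≤ b ∨ b ≤ a)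
    {ν ϖ : V} (h : ν ≠ ⊥) (hϖ : ϖ < ν) : ϖ ≤ pred' htree ν := by
  rw [pred', dif_neg h]; exact (exists_pred' htree h).choose_spec.2 ϖ hϖ

private noncomputable def inc (htree : ∀ ν a b : V, a ≤ ν → b ≤ ν → a ≤ b ∨ b ≤ a)
    (ℓ : V → ℕ) (ν : V) : ℕ :=
  if ν = ⊥ then ℓ ⊥ else ℓ ν - ℓ (pred' htree ν)

private lemma sum_inc (htree : ∀ ν a b : V, a ≤ ν → b ≤ ν → a ≤ b ∨ b ≤ a)
    (ℓ : V → ℕ) (hℓ : Monotone ℓ) :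
    ∀ ν : V, ∑ ϖ ∈ Finset.univ.filter (· ≤ ν), inc htree ℓ ϖ = ℓ ν := by
  intro ν
  induction ν using WellFoundedLT.induction with
  | _ ν ih =>
    by_cases h : ν = ⊥
    · subst h
      have hs : Finset.univ.filter (· ≤ (⊥:V)) = {⊥} := by
        ext x; simp [le_bot_iff]
      rw [hs]
      simp [inc]
    · have hp : pred' htree ν < ν := pred'_lt htree h
      have hset : Finset.univ.filter (· ≤ ν)
          = insert ν (Finset.univ.filter (· ≤ pred' htree ν)) := by
        ext x
        simp only [Finset.mem_filter, Finset.mem_univ, true_and, Finset.mem_insert]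
        constructor
        · intro hx
          rcases eq_or_lt_of_le hx with h' | h'
          · exact Or.inl h'
          · exact Or.inr (le_pred' htree h h')
        · rintro (rfl | hx)
          · exact le_rfl
          · exact hx.trans hp.le
      rw [hset, Finset.sum_insert (by simp [hp.not_ge]), ih _ hp]
      rw [inc, if_neg h]
      exact Nat.sub_add_cancel (hℓ hp.le)

private lemma inc_injective' (htree : ∀ ν a b : V, a ≤ ν → b ≤ ν → a ≤ b ∨ b ≤ a)
    {ℓ ℓ' : V → ℕ} (hℓ : Monotone ℓ) (hℓ' : Monotone ℓ')
    (h : inc htree ℓ = inc htree ℓ') : ℓ = ℓ' := by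
  funext ν
  rw [← sum_inc htree ℓ hℓ ν, ← sum_inc htree ℓ' hℓ' ν, h]

end Tree

set_option maxHeartbeats 1000000

/-- Summing over monotone labelings of a rooted tree (Lemma `theo:sumTree`):
the rooted tree is encoded as a finite partial order with bottom element (the root),
in which `ν ≥ ϖ` means that `ϖ` is an ancestor of `ν`, and such that the set of
ancestors of any node is totally ordered. Under the two sign conditions on `η`,
the sum `𝓘_λ(η) = ∑_{ℓ} ∏_ν 2^{-ℓ_ν η_ν}` over monotone labelings `ℓ : T° → ℕ`
with `2^{-ℓ_{ν⋆}} ≤ λ` converges and is bounded by `C λ^{|η|}`. -/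
theorem stmt2 (V : Type) [Fintype V] [PartialOrder V] [OrderBot V]
    (htree : ∀ ν a b : V, a ≤ ν → b ≤ ν → a ≤ b ∨ b ≤ a)
    (νstar : V) (η : V → ℝ)
    (h1 : ∀ ν : V, 0 < ∑ υ ∈ Finset.univ.filter (fun υ => ν ≤ υ), η υ)
    (h2 : ∀ ν : V, ν ≤ νstar →
      (Finset.univ.filter (fun υ => ¬ ν ≤ υ)).Nonempty →
      ∑ υ ∈ Finset.univ.filter (fun υ => ¬ ν ≤ υ), η υ < 0) :
    ∃ C : ℝ, ∀ lam : ℝ, 0 < lam → lam ≤ 1 →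
      Summable (fun ℓ : {ℓ : V → ℕ // Monotone ℓ ∧ (2:ℝ) ^ (-(ℓ νstar : ℝ)) ≤ lam} =>
        ∏ ν : V, (2:ℝ) ^ (-(ℓ.1 ν : ℝ) * η ν)) ∧
      (∑' ℓ : {ℓ : V → ℕ // Monotone ℓ ∧ (2:ℝ) ^ (-(ℓ νstar : ℝ)) ≤ lam},
        ∏ ν : V, (2:ℝ) ^ (-(ℓ.1 ν : ℝ) * η ν)) ≤ C * lam ^ (∑ ν : V, η ν) := by
  classical
  set A : ℝ := ∑ ν : V, η ν with hA_def
  set S : V → ℝ := fun ϖ => ∑ υ ∈ Finset.univ.filter (fun υ => ϖ ≤ υ), η υ with hS_def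
  have hA : 0 < A := by
    have := h1 ⊥
    simpa [Finset.filter_true_of_mem, bot_le] using this
  -- the positive exponents ε
  set ε : V → ℝ := fun ϖ => if ϖ = ⊥ then 1 else if ϖ ≤ νstar then S ϖ - A else S ϖ with hε_def
  have hε : ∀ ϖ : V, 0 < ε ϖ := by
    intro ϖ
    by_cases hb : ϖ = ⊥
    · simp [hε_def, hb]
    by_cases hs : ϖ ≤ νstar
    · have hne : (Finset.univ.filter (fun υ => ¬ ϖ ≤ υ)).Nonempty := by
        refine ⟨⊥, ?_⟩
        simp only [Finset.mem_filter, Finset.mem_univ, true_and]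
        rw [le_bot_iff]
        exact hb
      have hlt := h2 ϖ hs hne
      have hsplit : S ϖ + ∑ υ ∈ Finset.univ.filter (fun υ => ¬ ϖ ≤ υ), η υ = A := by
        rw [hS_def, hA_def]
        exact Finset.sum_filter_add_sum_filter_not _ _ _
      have : 0 < S ϖ - A := by linarith
      simpa [hε_def, hb, hs] using this
    · have := h1 ϖ
      simpa [hε_def, hb, hs] using this
  -- geometric ratios
  set r : V → ℝ≥0∞ := fun ϖ => ENNReal.ofReal ((2:ℝ) ^ (-ε ϖ)) with hr_def
  have hr1 : ∀ ϖ, r ϖ < 1 := by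
    intro ϖ
    rw [hr_def]
    exact ENNReal.ofReal_lt_one.mpr
      (Real.rpow_lt_one_of_one_lt_of_neg one_lt_two (neg_neg_iff_pos.mpr (hε ϖ)))
  set rA : ℝ≥0∞ := ENNReal.ofReal ((2:ℝ) ^ (-A)) with hrA_def
  have hrA1 : rA < 1 := ENNReal.ofReal_lt_one.mpr
    (Real.rpow_lt_one_of_one_lt_of_neg one_lt_two (neg_neg_iff_pos.mpr hA))
  have hsub_ne : ∀ x : ℝ≥0∞, x < 1 → (1 - x)⁻¹ ≠ ⊤ := by
    intro x hx
    rw [ENNReal.inv_ne_top]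
    intro h0
    exact absurd (tsub_eq_zero_iff_le.mp h0) (not_le.mpr hx)
  set K : ℝ≥0∞ := ∏ ϖ : V, (1 - r ϖ)⁻¹ with hK_def
  have hK_ne : K ≠ ⊤ := by
    rw [hK_def, ← lt_top_iff_ne_top]
    exact ENNReal.prod_lt_top (fun ϖ _ => lt_top_iff_ne_top.mpr (hsub_ne _ (hr1 ϖ)))
  have hKA_ne : (1 - rA)⁻¹ ≠ ⊤ := hsub_ne _ hrA1
  refine ⟨((1 - rA)⁻¹ * K).toReal, ?_⟩
  intro lam hlam0 hlam1
  -- the key per-labeling identity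
  have key : ∀ ℓ : V → ℕ, Monotone ℓ →
      (∏ ν : V, (2:ℝ) ^ (-(ℓ ν : ℝ) * η ν)) =
      (2:ℝ) ^ (-(ℓ νstar : ℝ) * A) *
        ∏ ϖ : V, (2:ℝ) ^ (-(Function.update (inc htree ℓ) ⊥ 0 ϖ : ℝ) * ε ϖ) := by
    intro ℓ hℓ
    set m : V → ℕ := inc htree ℓ with hm_def
    set m' : V → ℕ := Function.update m ⊥ 0 with hm'_def
    have sa : ∀ ν : V, (ℓ ν : ℝ) = ∑ ϖ ∈ Finset.univ.filter (· ≤ ν), (m ϖ : ℝ) := by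
      intro ν
      rw [← sum_inc htree ℓ hℓ ν]
      exact Nat.cast_sum _ _
    have stepa : ∑ ν : V, (ℓ ν : ℝ) * η ν = ∑ ϖ : V, (m ϖ : ℝ) * S ϖ := by
      calc ∑ ν : V, (ℓ ν : ℝ) * η ν
          = ∑ ν : V, ∑ ϖ ∈ Finset.univ.filter (· ≤ ν), (m ϖ : ℝ) * η ν := by
            refine Finset.sum_congr rfl fun ν _ => ?_
            rw [sa ν, Finset.sum_mul]
        _ = ∑ ν : V, ∑ ϖ : V, (if ϖ ≤ ν then (m ϖ : ℝ) * η ν else 0) := by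
            refine Finset.sum_congr rfl fun ν _ => ?_
            rw [Finset.sum_filter]
        _ = ∑ ϖ : V, ∑ ν : V, (if ϖ ≤ ν then (m ϖ : ℝ) * η ν else 0) := Finset.sum_comm
        _ = ∑ ϖ : V, (m ϖ : ℝ) * S ϖ := by
            refine Finset.sum_congr rfl fun ϖ _ => ?_
            rw [hS_def, ← Finset.sum_filter, Finset.mul_sum]
    have hnsum : (ℓ νstar : ℝ) = ∑ ϖ ∈ Finset.univ.filter (· ≤ νstar), (m ϖ : ℝ) := sa νstar
    have stepb : ∑ ϖ : V, (m ϖ : ℝ) * S ϖ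
        = (ℓ νstar : ℝ) * A + ∑ ϖ : V, (m' ϖ : ℝ) * ε ϖ := by
      have hsplit1 : ∑ ϖ : V, (m ϖ : ℝ) * S ϖ
          = ∑ ϖ ∈ Finset.univ.filter (· ≤ νstar), (m ϖ : ℝ) * S ϖ
            + ∑ ϖ ∈ Finset.univ.filter (fun ϖ => ¬ ϖ ≤ νstar), (m ϖ : ℝ) * S ϖ :=
        (Finset.sum_filter_add_sum_filter_not _ _ _).symm
      have hsplit2 : ∑ ϖ : V, (m' ϖ : ℝ) * ε ϖ
          = ∑ ϖ ∈ Finset.univ.filter (· ≤ νstar), (m' ϖ : ℝ) * ε ϖ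
            + ∑ ϖ ∈ Finset.univ.filter (fun ϖ => ¬ ϖ ≤ νstar), (m' ϖ : ℝ) * ε ϖ :=
        (Finset.sum_filter_add_sum_filter_not _ _ _).symm
      have hP : ∑ ϖ ∈ Finset.univ.filter (· ≤ νstar), (m ϖ : ℝ) * S ϖ
          = ∑ ϖ ∈ Finset.univ.filter (· ≤ νstar), ((m ϖ : ℝ) * A + (m' ϖ : ℝ) * ε ϖ) := by
        refine Finset.sum_congr rfl fun ϖ hϖ => ?_
        simp only [Finset.mem_filter, Finset.mem_univ, true_and] at hϖ
        by_cases hb : ϖ = ⊥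
        · subst hb
          have hSbot : S ⊥ = A := by
            rw [hS_def, hA_def]
            refine Finset.sum_congr ?_ (fun _ _ => rfl)
            ext x; simp
          rw [hSbot, hm'_def, Function.update_self]
          push_cast
          ring
        · rw [hm'_def, Function.update_of_ne hb, hε_def]
          simp only [hb, if_false, hϖ, if_true]
          ring
      have hQ : ∑ ϖ ∈ Finset.univ.filter (fun ϖ => ¬ ϖ ≤ νstar), (m ϖ : ℝ) * S ϖ
          = ∑ ϖ ∈ Finset.univ.filter (fun ϖ => ¬ ϖ ≤ νstar), (m' ϖ : ℝ) * ε ϖ := by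
        refine Finset.sum_congr rfl fun ϖ hϖ => ?_
        simp only [Finset.mem_filter, Finset.mem_univ, true_and] at hϖ
        have hb : ϖ ≠ ⊥ := by
          intro hbb; exact hϖ (hbb ▸ bot_le)
        rw [hm'_def, Function.update_of_ne hb, hε_def]
        simp only [hb, if_false, hϖ, if_false]
      rw [hsplit1, hsplit2, hP, hQ, Finset.sum_add_distrib, ← Finset.sum_mul, ← hnsum]
      ring
    have hexp : ∑ ν : V, -(ℓ ν : ℝ) * η ν
        = -(ℓ νstar : ℝ) * A + ∑ ϖ : V, -(m' ϖ : ℝ) * ε ϖ := by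
      have e1 : ∑ ν : V, -(ℓ ν : ℝ) * η ν = -∑ ν : V, (ℓ ν : ℝ) * η ν := by
        rw [← Finset.sum_neg_distrib]
        exact Finset.sum_congr rfl fun ν _ => by ring
      have e2 : ∑ ϖ : V, -(m' ϖ : ℝ) * ε ϖ = -∑ ϖ : V, (m' ϖ : ℝ) * ε ϖ := by
        rw [← Finset.sum_neg_distrib]
        exact Finset.sum_congr rfl fun ν _ => by ring
      rw [e1, e2, stepa, stepb]
      ring
    calc ∏ ν : V, (2:ℝ) ^ (-(ℓ ν : ℝ) * η ν)
        = (2:ℝ) ^ (∑ ν : V, -(ℓ ν : ℝ) * η ν) :=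
          (Real.rpow_sum_of_pos two_pos _ _).symm
      _ = (2:ℝ) ^ (-(ℓ νstar : ℝ) * A) * (2:ℝ) ^ (∑ ϖ : V, -(m' ϖ : ℝ) * ε ϖ) := by
          rw [hexp, Real.rpow_add two_pos]
      _ = (2:ℝ) ^ (-(ℓ νstar : ℝ) * A) * ∏ ϖ : V, (2:ℝ) ^ (-(m' ϖ : ℝ) * ε ϖ) := by
          rw [Real.rpow_sum_of_pos two_pos]
  -- notation for the summand
  set T : {ℓ : V → ℕ // Monotone ℓ ∧ (2:ℝ) ^ (-(ℓ νstar : ℝ)) ≤ lam} → ℝ :=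
    fun ℓ => ∏ ν : V, (2:ℝ) ^ (-(ℓ.1 ν : ℝ) * η ν) with hT_def
  have hT_nonneg : ∀ ℓ, 0 ≤ T ℓ := fun ℓ =>
    Finset.prod_nonneg fun ν _ => Real.rpow_nonneg (by norm_num) _
  -- the dominating function on ℕ × (V → ℕ)
  set g : ℕ × (V → ℕ) → ℝ≥0∞ := fun p =>
    (if (2:ℝ) ^ (-(p.1 : ℝ)) ≤ lam then rA ^ p.1 else 0) * ∏ ϖ : V, r ϖ ^ (p.2 ϖ) with hg_def
  set Φ : {ℓ : V → ℕ // Monotone ℓ ∧ (2:ℝ) ^ (-(ℓ νstar : ℝ)) ≤ lam} → ℕ × (V → ℕ) :=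
    fun ℓ => (ℓ.1 νstar, Function.update (inc htree ℓ.1) ⊥ 0) with hΦ_def
  have hΦinj : Function.Injective Φ := by
    intro ℓ ℓ' h
    rw [hΦ_def] at h
    have hfst : ℓ.1 νstar = ℓ'.1 νstar := congrArg Prod.fst h
    have hsnd : Function.update (inc htree ℓ.1) ⊥ 0 = Function.update (inc htree ℓ'.1) ⊥ 0 :=
      congrArg Prod.snd h
    have hup : ∀ ϖ : V, ϖ ≠ ⊥ → inc htree ℓ.1 ϖ = inc htree ℓ'.1 ϖ := by
      intro ϖ hϖ
      have := congrFun hsnd ϖ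
      rwa [Function.update_of_ne hϖ, Function.update_of_ne hϖ] at this
    have hbot : inc htree ℓ.1 ⊥ = inc htree ℓ'.1 ⊥ := by
      have e1 := sum_inc htree ℓ.1 ℓ.2.1 νstar
      have e2 := sum_inc htree ℓ'.1 ℓ'.2.1 νstar
      have hmem : ⊥ ∈ Finset.univ.filter (· ≤ νstar) := by simp
      rw [← Finset.add_sum_erase _ _ hmem] at e1 e2
      have herase : ∑ ϖ ∈ (Finset.univ.filter (· ≤ νstar)).erase ⊥, inc htree ℓ.1 ϖ
          = ∑ ϖ ∈ (Finset.univ.filter (· ≤ νstar)).erase ⊥, inc htree ℓ'.1 ϖ :=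
        Finset.sum_congr rfl fun ϖ hϖ => hup ϖ (Finset.ne_of_mem_erase hϖ)
      rw [herase] at e1
      rw [← hfst] at e2
      omega
    refine Subtype.ext (inc_injective' htree ℓ.2.1 ℓ'.2.1 (funext fun ϖ => ?_))
    by_cases hb : ϖ = ⊥
    · subst hb; exact hbot
    · exact hup ϖ hb
  have hpow_eq : ∀ (x : ℝ) (n : ℕ), 0 < x →
      (2:ℝ) ^ (-(n : ℝ) * x) = ((2:ℝ) ^ (-x)) ^ n := by
    intro x n hx
    rw [← Real.rpow_natCast ((2:ℝ) ^ (-x)) n, ← Real.rpow_mul (by norm_num : (0:ℝ) ≤ 2)]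
    ring_nf
  have hTg : ∀ ℓ, ENNReal.ofReal (T ℓ) = g (Φ ℓ) := by
    intro ℓ
    rw [hT_def]
    show ENNReal.ofReal (∏ ν : V, (2:ℝ) ^ (-(ℓ.1 ν : ℝ) * η ν)) = _
    rw [key ℓ.1 ℓ.2.1, hg_def, hΦ_def]
    rw [ENNReal.ofReal_mul (Real.rpow_nonneg (by norm_num) _)]
    congr 1
    · rw [if_pos ℓ.2.2, hpow_eq A (ℓ.1 νstar) hA, hrA_def,
        ENNReal.ofReal_pow (Real.rpow_nonneg (by norm_num) _)]
    · rw [ENNReal.ofReal_prod_of_nonneg (fun ϖ _ => Real.rpow_nonneg (by norm_num) _)]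
      refine Finset.prod_congr rfl fun ϖ _ => ?_
      rw [hpow_eq (ε ϖ) _ (hε ϖ), hr_def,
        ENNReal.ofReal_pow (Real.rpow_nonneg (by norm_num) _)]
  -- bound on the ℕ-indexed sum
  have hnsum_bound : (∑' n : ℕ, if (2:ℝ) ^ (-(n : ℝ)) ≤ lam then rA ^ n else 0)
      ≤ ENNReal.ofReal (lam ^ A) * (1 - rA)⁻¹ := by
    have hex : ∃ n : ℕ, (2:ℝ) ^ (-(n : ℝ)) ≤ lam := by
      obtain ⟨n, hn⟩ := exists_pow_lt_of_lt_one hlam0 (by norm_num : (1:ℝ)/2 < 1)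
      refine ⟨n, le_of_lt ?_⟩
      rwa [show (2:ℝ) ^ (-(n:ℝ)) = (1/2:ℝ)^n by
        rw [Real.rpow_neg (by norm_num), Real.rpow_natCast]
        simp [one_div, inv_pow]]
    obtain ⟨L, hLspec, hLmin⟩ : ∃ L : ℕ, ((2:ℝ) ^ (-(L : ℝ)) ≤ lam) ∧
        ∀ k : ℕ, k < L → ¬ ((2:ℝ) ^ (-(k : ℝ)) ≤ lam) :=
      ⟨Nat.find hex, Nat.find_spec hex, fun k hk => Nat.find_min hex hk⟩
    have hcond : ∀ n : ℕ, ((2:ℝ) ^ (-(n : ℝ)) ≤ lam) ↔ L ≤ n := by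
      intro n
      constructor
      · intro h
        by_contra hlt
        push_neg at hlt
        exact hLmin n hlt h
      · intro h
        calc (2:ℝ) ^ (-(n : ℝ)) ≤ (2:ℝ) ^ (-(L : ℝ)) :=
              Real.rpow_le_rpow_of_exponent_le one_le_two
                (neg_le_neg (by exact_mod_cast h))
          _ ≤ lam := hLspec
    have hrw : ∀ n : ℕ, (if (2:ℝ) ^ (-(n : ℝ)) ≤ lam then rA ^ n else 0)
        = (if L ≤ n then rA ^ n else 0) := fun n => by
      by_cases h : L ≤ n
      · rw [if_pos ((hcond n).mpr h), if_pos h]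
      · rw [if_neg (fun hc => h ((hcond n).mp hc)), if_neg h]
    have hshift : ∀ k : ℕ, (if L ≤ L + k then rA ^ (L + k) else 0) = rA ^ L * rA ^ k :=
      fun k => by rw [if_pos (Nat.le_add_right L k), pow_add]
    have hinj : Function.Injective (fun k : ℕ => L + k) := fun a b h => by simpa using h
    have hsupp : Function.support (fun n : ℕ => if L ≤ n then rA ^ n else 0)
        ⊆ Set.range (fun k : ℕ => L + k) := by
      intro n hn
      simp only [Function.mem_support, ne_eq, ite_eq_right_iff, not_forall] at hn
      obtain ⟨hLn, -⟩ := hn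
      refine ⟨n - L, ?_⟩
      show L + (n - L) = n
      omega
    have hLA : rA ^ L ≤ ENNReal.ofReal (lam ^ A) := by
      have heq : rA ^ L = ENNReal.ofReal (((2:ℝ) ^ (-(L:ℝ))) ^ A) := by
        rw [hrA_def, ← ENNReal.ofReal_pow (Real.rpow_nonneg (by norm_num) _)]
        congr 1
        rw [← Real.rpow_natCast ((2:ℝ) ^ (-A)) L, ← Real.rpow_mul (by norm_num : (0:ℝ) ≤ 2),
          ← Real.rpow_mul (by norm_num : (0:ℝ) ≤ 2)]
        ring_nf
      rw [heq]
      exact ENNReal.ofReal_le_ofReal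
        (Real.rpow_le_rpow (Real.rpow_nonneg (by norm_num) _) hLspec hA.le)
    calc (∑' n : ℕ, if (2:ℝ) ^ (-(n : ℝ)) ≤ lam then rA ^ n else 0)
        = ∑' n : ℕ, (if L ≤ n then rA ^ n else 0) := tsum_congr hrw
      _ = ∑' k : ℕ, (if L ≤ L + k then rA ^ (L + k) else 0) := (hinj.tsum_eq hsupp).symm
      _ = ∑' k : ℕ, rA ^ L * rA ^ k := tsum_congr hshift
      _ = rA ^ L * ∑' k : ℕ, rA ^ k := ENNReal.tsum_mul_left
      _ = rA ^ L * (1 - rA)⁻¹ := by rw [ENNReal.tsum_geometric]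
      _ ≤ ENNReal.ofReal (lam ^ A) * (1 - rA)⁻¹ := mul_le_mul_left hLA _
  -- the master bound in ℝ≥0∞
  have hbound : (∑' ℓ, ENNReal.ofReal (T ℓ))
      ≤ ENNReal.ofReal (lam ^ A) * ((1 - rA)⁻¹ * K) := by
    calc (∑' ℓ, ENNReal.ofReal (T ℓ)) = ∑' ℓ, g (Φ ℓ) := tsum_congr hTg
      _ ≤ ∑' p : ℕ × (V → ℕ), g p := ENNReal.tsum_comp_le_tsum_of_injective hΦinj g
      _ = (∑' n : ℕ, if (2:ℝ) ^ (-(n : ℝ)) ≤ lam then rA ^ n else 0)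
            * ∑' mm : V → ℕ, ∏ ϖ : V, r ϖ ^ (mm ϖ) := by
          rw [ENNReal.tsum_prod']
          rw [hg_def]
          simp_rw [ENNReal.tsum_mul_left]
          rw [ENNReal.tsum_mul_right]
      _ = (∑' n : ℕ, if (2:ℝ) ^ (-(n : ℝ)) ≤ lam then rA ^ n else 0) * K := by
          rw [tsum_pi_prod' (fun ϖ k => r ϖ ^ k), hK_def]
          congr 1
          exact Finset.prod_congr rfl fun ϖ _ => ENNReal.tsum_geometric (r ϖ)
      _ ≤ (ENNReal.ofReal (lam ^ A) * (1 - rA)⁻¹) * K := mul_le_mul_left hnsum_bound K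
      _ = ENNReal.ofReal (lam ^ A) * ((1 - rA)⁻¹ * K) := by rw [mul_assoc]
  have hRHS_ne : ENNReal.ofReal (lam ^ A) * ((1 - rA)⁻¹ * K) ≠ ⊤ :=
    ENNReal.mul_ne_top ENNReal.ofReal_ne_top (ENNReal.mul_ne_top hKA_ne hK_ne)
  have hne_top : (∑' ℓ, ENNReal.ofReal (T ℓ)) ≠ ⊤ := ne_top_of_le_ne_top hRHS_ne hbound
  constructor
  · have hsummable := ENNReal.summable_toReal hne_top
    exact hsummable.congr fun ℓ => ENNReal.toReal_ofReal (hT_nonneg ℓ)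
  · calc (∑' ℓ, T ℓ) = ∑' ℓ, (ENNReal.ofReal (T ℓ)).toReal :=
          tsum_congr fun ℓ => (ENNReal.toReal_ofReal (hT_nonneg ℓ)).symm
      _ = (∑' ℓ, ENNReal.ofReal (T ℓ)).toReal :=
          (ENNReal.tsum_toReal_eq fun _ => ENNReal.ofReal_ne_top).symm
      _ ≤ (ENNReal.ofReal (lam ^ A) * ((1 - rA)⁻¹ * K)).toReal :=
          ENNReal.toReal_mono hRHS_ne hbound
      _ = lam ^ A * ((1 - rA)⁻¹ * K).toReal := by
          rw [ENNReal.toReal_mul, ENNReal.toReal_ofReal (Real.rpow_nonneg hlam0.le _)]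
      _ = ((1 - rA)⁻¹ * K).toReal * lam ^ A := mul_comm _ _
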